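/- (N-step truncated credit, Section 4.1.1.) Fix N ≥ 1, T ≥ N, t ≥ 0, a real γ, a state s_t with sequences of states s : ℕ → S and rewards r : ℕ → ℝ, a value function V : S → ℝ, a sampled action a_t ∈ A, and a policy row q : A → ℝ with q(a) ≥ 0 and Σ_{a∈A} q(a) = 1 (representing π_θ(·|s_t)). Define 𝒜_k := γ·V(s_{k+1}) + r_k − V(s_k), and the credit function C_k(a) := [a = a_t] if k − t < N and C_k(a) := q(a) if k − t ≥ N, and G^C_{t,a} := Σ_{k=t}^{t+T−1} γ^{k−t}·C_k(a)·𝒜_k. Then (i) G^C_{t,a} = [a = a_t]·( Σ_{k=t}^{t+N−1} γ^{k−t}·r_k + γ^N·V(s_{t+N}) − V(s_t) ) + q(a)·Σ_{k=t+N}^{t+T−1} γ^{k−t}·𝒜_k, and (ii) for any differentiable family θ ↦ q_θ : A → ℝ with q_θ(a) > 0 and Σ_{a∈A} q_θ(a) = 1 for all θ ∈ ℝ^d, taking q = q_θ one has Σ_{a∈A} ∇_θ log q_θ(a) · G^C_{t,a} = ∇_θ log q_θ(a_t) · ( Σ_{k=t}^{t+N−1} γ^{k−t}·r_k + γ^N·V(s_{t+N})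 − V(s_t) ), i.e. the counterfactual term beyond horizon N vanishes and the update reduces to the A2C update with N-step truncated advantages. -/

import Mathlib

open Finset

open scoped Classical

lemma telescope_aux {S : Type*} (t N : ℕ) (γ : ℝ) (V : S → ℝ) (s : ℕ → S) :
    ∑ k ∈ Finset.Ico t (t + N), γ ^ (k - t) * (γ * V (s (k + 1)) - V (s k)) =
      γ ^ N * V (s (t + N)) - V (s t) := by
  rw [Finset.sum_Ico_eq_sum_range]
  simp only [Nat.add_sub_cancel_left]
  have h := Finset.sum_range_sub (f := fun j => γ ^ j * V (s (t + j))) N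
  simp only [pow_zero, Nat.add_zero, one_mul] at h
  rw [← h]
  apply Finset.sum_congr rfl
  intro j _
  have : t + j + 1 = t + (j + 1) := by omega
  rw [this, pow_succ]
  ring

lemma part_i {S A : Type*} (N T : ℕ) (hT : N ≤ T) (t : ℕ) (γ : ℝ) (s : ℕ → S)
    (r : ℕ → ℝ) (V : S → ℝ) (aSampled : A) (q : A → ℝ) (a : A) :
    (∑ k ∈ Finset.Ico t (t + T),
        γ ^ (k - t) *
          (if k - t < N then (if a = aSampled then (1 : ℝ) else 0) else q a) *
          (γ * V (s (k + 1)) + r k - V (s k))) =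
      (if a = aSampled then (1 : ℝ) else 0) *
          ((∑ k ∈ Finset.Ico t (t + N), γ ^ (k - t) * r k) +
            γ ^ N * V (s (t + N)) - V (s t)) +
        q a * ∑ k ∈ Finset.Ico (t + N) (t + T),
            γ ^ (k - t) * (γ * V (s (k + 1)) + r k - V (s k)) := by
  rw [← Finset.sum_Ico_consecutive _ (by omega : t ≤ t + N) (by omega : t + N ≤ t + T)]
  congr 1
  · have h1 : ∀ k ∈ Finset.Ico t (t + N),
        γ ^ (k - t) * (if k - t < N then (if a = aSampled then (1 : ℝ) else 0) else q a) *
          (γ * V (s (k + 1)) + r k - V (s k)) =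
        (if a = aSampled then (1 : ℝ) else 0) *
          (γ ^ (k - t) * r k + γ ^ (k - t) * (γ * V (s (k + 1)) - V (s k))) := by
      intro k hk
      simp only [Finset.mem_Ico] at hk
      rw [if_pos (by omega)]
      ring
    rw [Finset.sum_congr rfl h1, ← Finset.mul_sum, Finset.sum_add_distrib,
      telescope_aux]
    ring
  · have h2 : ∀ k ∈ Finset.Ico (t + N) (t + T),
        γ ^ (k - t) * (if k - t < N then (if a = aSampled then (1 : ℝ) else 0) else q a) *
          (γ * V (s (k + 1)) + r k - V (s k)) =
        q a * (γ ^ (k - t) * (γ * V (s (k + 1)) + r k - V (s k))) := by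
      intro k hk
      simp only [Finset.mem_Ico] at hk
      rw [if_neg (by omega)]
      ring
    rw [Finset.sum_congr rfl h2, ← Finset.mul_sum]

lemma grad_sum_zero {A : Type*} [Fintype A] {d : ℕ}
    (qθ : EuclideanSpace ℝ (Fin d) → A → ℝ)
    (hnorm : ∀ θ, ∑ a, qθ θ a = 1)
    (hd : ∀ a, Differentiable ℝ fun θ => qθ θ a)
    (θ : EuclideanSpace ℝ (Fin d)) :
    ∑ a, fderiv ℝ (fun θ' => qθ θ' a) θ = 0 := by
  have h1 : fderiv ℝ (fun θ' => ∑ a, qθ θ' a) θ = 0 := by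
    have : (fun θ' : EuclideanSpace ℝ (Fin d) => ∑ a, qθ θ' a) = fun _ => (1 : ℝ) := by
      funext θ'; exact hnorm θ'
    rw [this, fderiv_fun_const]; rfl
  rw [← h1, fderiv_fun_sum fun a _ => (hd a).differentiableAt]

lemma part_ii_aux {S A : Type*} [Fintype S] [Fintype A]
    (N T : ℕ) (hT : N ≤ T) (t : ℕ) (γ : ℝ) (s : ℕ → S) (r : ℕ → ℝ)
    (V : S → ℝ) (aSampled : A) :
    (∀ (d : ℕ) (qθ : EuclideanSpace ℝ (Fin d) → A → ℝ),
      (∀ θ a, 0 < qθ θ a) → (∀ θ, ∑ a, qθ θ a = 1) →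
      (∀ a, Differentiable ℝ fun θ => qθ θ a) →
      ∀ θ : EuclideanSpace ℝ (Fin d),
        (∑ a, (∑ k ∈ Finset.Ico t (t + T),
            γ ^ (k - t) *
              (if k - t < N then (if a = aSampled then (1 : ℝ) else 0) else qθ θ a) *
              (γ * V (s (k + 1)) + r k - V (s k))) •
          fderiv ℝ (fun θ' => Real.log (qθ θ' a)) θ) =
        ((∑ k ∈ Finset.Ico t (t + N), γ ^ (k - t) * r k) +
            γ ^ N * V (s (t + N)) - V (s t)) •
          fderiv ℝ (fun θ' => Real.log (qθ θ' aSampled)) θ) := by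
  intro d qθ hpos hnorm hdiff θ
  set X := (∑ k ∈ Finset.Ico t (t + N), γ ^ (k - t) * r k) +
      γ ^ N * V (s (t + N)) - V (s t) with hX
  set Y := ∑ k ∈ Finset.Ico (t + N) (t + T),
      γ ^ (k - t) * (γ * V (s (k + 1)) + r k - V (s k)) with hY
  have hL : ∀ a, fderiv ℝ (fun θ' => Real.log (qθ θ' a)) θ =
      (qθ θ a)⁻¹ • fderiv ℝ (fun θ' => qθ θ' a) θ := fun a =>
    (((hdiff a).differentiableAt.hasFDerivAt).log (ne_of_gt (hpos θ a))).fderiv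
  calc ∑ a, (∑ k ∈ Finset.Ico t (t + T),
            γ ^ (k - t) *
              (if k - t < N then (if a = aSampled then (1 : ℝ) else 0) else qθ θ a) *
              (γ * V (s (k + 1)) + r k - V (s k))) •
          fderiv ℝ (fun θ' => Real.log (qθ θ' a)) θ
      = ∑ a, (((if a = aSampled then (1 : ℝ) else 0) * X) •
            fderiv ℝ (fun θ' => Real.log (qθ θ' a)) θ +
          Y • (qθ θ a • ((qθ θ a)⁻¹ • fderiv ℝ (fun θ' => qθ θ' a) θ))) := by
        apply Finset.sum_congr rfl
        intro a _
        rw [part_i N T hT t γ s r V aSampled (qθ θ) a, ← hX, ← hY, add_smul, hL a]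
        congr 1
        rw [smul_smul, smul_smul, smul_smul]
        congr 1
        ring
    _ = X • fderiv ℝ (fun θ' => Real.log (qθ θ' aSampled)) θ +
          Y • ∑ a, fderiv ℝ (fun θ' => qθ θ' a) θ := by
        rw [Finset.sum_add_distrib]
        congr 1
        · rw [Finset.sum_eq_single aSampled]
          · simp
          · intro b _ hb; simp [hb]
          · simp
        · rw [← Finset.smul_sum]
          congr 1
          apply Finset.sum_congr rfl
          intro a _
          rw [smul_smul, mul_inv_cancel₀ (ne_of_gt (hpos θ a)), one_smul]
    _ = X • fderiv ℝ (fun θ' => Real.log (qθ θ' aSampled)) θ := by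
        rw [grad_sum_zero qθ hnorm hdiff θ, smul_zero, add_zero]

/-- N-step truncated credit.  With the credit function equal to the
indicator `[a = a_t]` within horizon `N` and to the policy row `q` beyond it, (i) the
credited truncated return of augmented rewards splits into the `N`-step bootstrapped
advantage for the sampled action plus a policy-weighted tail, and (ii) for any positive
differentiable normalized family `q_θ`, the resulting policy update reduces to the A2C
update with `N`-step truncated advantages (the counterfactual tail vanishes). -/
theorem n_step_truncated_credit
    {S A : Type*} [Fintype S] [Fintype A] [Nonempty S] [Nonempty A]
    (N T : ℕ) (hN : 1 ≤ N) (hT : N ≤ T) (t : ℕ) (γ : ℝ) (s : ℕ → S) (r : ℕ → ℝ)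
    (V : S → ℝ) (aSampled : A)
    (q : A → ℝ) (hq0 : ∀ a, 0 ≤ q a) (hq1 : ∑ a, q a = 1) :
    (∀ a : A,
      (∑ k ∈ Finset.Ico t (t + T),
          γ ^ (k - t) *
            (if k - t < N then (if a = aSampled then (1 : ℝ) else 0) else q a) *
            (γ * V (s (k + 1)) + r k - V (s k))) =
        (if a = aSampled then (1 : ℝ) else 0) *
            ((∑ k ∈ Finset.Ico t (t + N), γ ^ (k - t) * r k) +
              γ ^ N * V (s (t + N)) - V (s t)) +
          q a * ∑ k ∈ Finset.Ico (t + N) (t + T),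
              γ ^ (k - t) * (γ * V (s (k + 1)) + r k - V (s k))) ∧
    (∀ (d : ℕ) (qθ : EuclideanSpace ℝ (Fin d) → A → ℝ),
      (∀ θ a, 0 < qθ θ a) → (∀ θ, ∑ a, qθ θ a = 1) →
      (∀ a, Differentiable ℝ fun θ => qθ θ a) →
      ∀ θ : EuclideanSpace ℝ (Fin d),
        (∑ a, (∑ k ∈ Finset.Ico t (t + T),
            γ ^ (k - t) *
              (if k - t < N then (if a = aSampled then (1 : ℝ) else 0) else qθ θ a) *
              (γ * V (s (k + 1)) + r k - V (s k))) •
          fderiv ℝ (fun θ' => Real.log (qθ θ' a)) θ) =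
        ((∑ k ∈ Finset.Ico t (t + N), γ ^ (k - t) * r k) +
            γ ^ N * V (s (t + N)) - V (s t)) •
          fderiv ℝ (fun θ' => Real.log (qθ θ' aSampled)) θ) := by
  refine ⟨fun a => part_i N T hT t γ s r V aSampled q a,
    part_ii_aux N T hT t γ s r V aSampled⟩
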